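/- Let D = {z ∈ ℂ : |z| ≤ 1} be the closed unit disc and let {T_n} be a sequence of positive linear maps from C(D) into C(D) such that T_n 1 → 1, T_n z → z, and T_n |z|² → |z|² uniformly on D (where z denotes the identity function w ↦ w and |z|² the function w ↦ |w|²). Then ‖T_n f − f‖ → 0 as n → ∞ for every f ∈ C(D). -/

import Mathlib

open Filter Topology

instance : CompactSpace ↥(Metric.closedBall (0 : ℂ) 1) :=
  isCompact_iff_compactSpace.mp (isCompact_closedBall _ _)

/-- The identity function `z : w ↦ w` as an element of `C(D, ℂ)`, where `D` is the closed
unit disc. -/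
def discIdFun : C(↥(Metric.closedBall (0 : ℂ) 1), ℂ) :=
  ⟨fun z => (z : ℂ), continuous_subtype_val⟩

/-- The function `|z|² : w ↦ |w|²` as an element of `C(D, ℂ)`. -/
noncomputable def discAbsSqFun : C(↥(Metric.closedBall (0 : ℂ) 1), ℂ) :=
  ⟨fun z => ((‖(z : ℂ)‖ ^ 2 : ℝ) : ℂ),
    Complex.continuous_ofReal.comp ((continuous_norm.comp continuous_subtype_val).pow 2)⟩

namespace KorovkinAux

abbrev D1 := ↥(Metric.closedBall (0 : ℂ) 1)

noncomputable def iota (g : C(D1, ℝ)) : C(D1, ℂ) :=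
  ⟨fun z => (g z : ℂ), Complex.continuous_ofReal.comp g.continuous⟩

@[simp] lemma iota_apply (g : C(D1, ℝ)) (z : D1) : iota g z = (g z : ℂ) := rfl

lemma iota_sub (g h : C(D1, ℝ)) : iota (g - h) = iota g - iota h := by
  ext z; simp [iota]

lemma iota_one : iota 1 = 1 := by ext z; simp [iota]

noncomputable def cId : C(D1, ℂ) :=
  ⟨fun z => (starRingEnd ℂ) (z : ℂ), Complex.continuous_conj.comp continuous_subtype_val⟩

@[simp] lemma cId_apply (z : D1) : cId z = (starRingEnd ℂ) (z : ℂ) := rfl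

noncomputable def rePart : C(D1, ℝ) :=
  ⟨fun z => (z : ℂ).re, Complex.continuous_re.comp continuous_subtype_val⟩

noncomputable def imPart : C(D1, ℝ) :=
  ⟨fun z => (z : ℂ).im, Complex.continuous_im.comp continuous_subtype_val⟩

lemma id_decomp : discIdFun = iota rePart + Complex.I • iota imPart := by
  ext z
  simp [discIdFun, rePart, imPart, iota, Complex.ext_iff]

lemma cid_decomp : cId = iota rePart - Complex.I • iota imPart := by
  ext z
  simp [cId, rePart, imPart, iota, Complex.ext_iff]

noncomputable def qw (w : D1) : C(D1, ℝ) :=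
  ⟨fun z => ‖(z : ℂ) - (w : ℂ)‖ ^ 2,
    (continuous_norm.comp (continuous_subtype_val.sub continuous_const)).pow 2⟩

@[simp] lemma qw_apply (w z : D1) : qw w z = ‖(z : ℂ) - (w : ℂ)‖ ^ 2 := rfl

lemma abs_sq_eq (u : ℂ) : ((‖u‖ : ℝ) : ℂ) ^ 2 = u * (starRingEnd ℂ) u := by
  rw [← Complex.ofReal_pow, ← Complex.normSq_eq_norm_sq, Complex.mul_conj]

lemma qw_decomp (w : D1) :
    iota (qw w) = discAbsSqFun - ((starRingEnd ℂ) (w : ℂ)) • discIdFun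
      - (w : ℂ) • cId + ((w : ℂ) * (starRingEnd ℂ) (w : ℂ)) • (1 : C(D1, ℂ)) := by
  ext z
  simp [discAbsSqFun, discIdFun, abs_sq_eq, map_sub]
  ring

lemma max_zero_decomp (g : C(D1, ℝ)) : iota g = iota (g ⊔ 0) - iota ((-g) ⊔ 0) := by
  ext z
  simp [iota]
  rcases le_total (g z) 0 with h | h
  · rw [max_eq_right h, max_eq_left (by linarith)]; push_cast; ring
  · rw [max_eq_left h, max_eq_right (by linarith)]; push_cast; ring

variable (L : C(D1, ℂ) →ₗ[ℂ] C(D1, ℂ))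
variable (hL : ∀ f : C(D1, ℂ), (∀ z, (f z).im = 0 ∧ 0 ≤ (f z).re) →
    ∀ z, ((L f) z).im = 0 ∧ 0 ≤ ((L f) z).re)

include hL

lemma nonneg_part (g : C(D1, ℝ)) (z : D1) :
    ((L (iota (g ⊔ 0))) z).im = 0 ∧ 0 ≤ ((L (iota (g ⊔ 0))) z).re := by
  refine hL _ (fun z => ⟨by simp, ?_⟩) z
  simp [le_max_right]

lemma real_im (g : C(D1, ℝ)) (z : D1) : ((L (iota g)) z).im = 0 := by
  rw [max_zero_decomp g, map_sub]
  simp [(nonneg_part L hL g z).1, (nonneg_part L hL (-g) z).1]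

lemma mono_re (g h : C(D1, ℝ)) (hb : ∀ z, g z ≤ h z) (z : D1) :
    ((L (iota g)) z).re ≤ ((L (iota h)) z).re := by
  have key := hL (iota (h - g)) (fun z => ⟨by simp, by simp [hb z]⟩) z
  rw [iota_sub, map_sub] at key
  simpa using key.2

lemma abs_re_le (h G : C(D1, ℝ)) (hb : ∀ z, |h z| ≤ G z) (z : D1) :
    |((L (iota h)) z).re| ≤ ((L (iota G)) z).re := by
  rw [abs_le]
  constructor
  · have key := mono_re L hL (-G) h
      (fun z => by have := (abs_le.1 (hb z)).1; simpa using this) z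
    have hneg : iota (-G) = - iota G := by ext z; simp [iota]
    rw [hneg, map_neg] at key
    simpa using key
  · exact mono_re L hL h G (fun z => (abs_le.1 (hb z)).2) z

lemma cId_est (w : D1) :
    ‖(L cId) w - cId w‖ ≤ ‖L discIdFun - discIdFun‖ := by
  have ha : (starRingEnd ℂ) ((L (iota rePart)) w) = (L (iota rePart)) w :=
    Complex.conj_eq_iff_im.2 (real_im L hL rePart w)
  have hb : (starRingEnd ℂ) ((L (iota imPart)) w) = (L (iota imPart)) w :=
    Complex.conj_eq_iff_im.2 (real_im L hL imPart w)
  have hconj : (L cId) w - cId w = (starRingEnd ℂ) ((L discIdFun) w - discIdFun w) := by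
    rw [id_decomp, cid_decomp, map_sub, map_add, map_smul]
    simp only [ContinuousMap.sub_apply, ContinuousMap.add_apply, ContinuousMap.smul_apply,
      smul_eq_mul, map_sub, map_add, map_mul, Complex.conj_I, iota_apply,
      Complex.conj_ofReal, ha, hb]
    ring
  rw [hconj, Complex.norm_conj]
  calc ‖(L discIdFun) w - discIdFun w‖ = ‖(L discIdFun - discIdFun) w‖ := by
        simp
    _ ≤ _ := ContinuousMap.norm_coe_le_norm _ _

lemma key_est (g : C(D1, ℝ)) (ε K : ℝ) (hε : 0 < ε) (hK : 0 ≤ K)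
    (hbd : ∀ z w : D1, |g z - g w| ≤ ε + K * ‖(z : ℂ) - (w : ℂ)‖ ^ 2) (w : D1) :
    ‖(L (iota g)) w - (g w : ℂ)‖ ≤
      ε * (1 + ‖L 1 - 1‖)
      + K * (‖L discAbsSqFun - discAbsSqFun‖ + 2 * ‖L discIdFun - discIdFun‖ + ‖L 1 - 1‖)
      + ‖g‖ * ‖L 1 - 1‖ := by
  set a := ‖L 1 - 1‖ with ha_def
  set c := ‖L discIdFun - discIdFun‖ with hc_def
  set d := ‖L discAbsSqFun - discAbsSqFun‖ with hd_def
  have hw1 : ‖(w : ℂ)‖ ≤ 1 := by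
    have h := w.2
    rwa [Metric.mem_closedBall, Complex.dist_eq, sub_zero] at h
  have e1 : ‖(L 1) w - 1‖ ≤ a := by
    calc ‖(L 1) w - 1‖ = ‖(L 1 - 1 : C(D1, ℂ)) w‖ := by
          simp
      _ ≤ a := ContinuousMap.norm_coe_le_norm _ _
  have e2 : ‖(L discIdFun) w - discIdFun w‖ ≤ c := by
    calc ‖(L discIdFun) w - discIdFun w‖ = ‖(L discIdFun - discIdFun) w‖ := by
          simp
      _ ≤ c := ContinuousMap.norm_coe_le_norm _ _
  have e3 : ‖(L discAbsSqFun) w - discAbsSqFun w‖ ≤ d := by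
    calc ‖(L discAbsSqFun) w - discAbsSqFun w‖
          = ‖(L discAbsSqFun - discAbsSqFun) w‖ := by simp
      _ ≤ d := ContinuousMap.norm_coe_le_norm _ _
  have e4 : ‖(L cId) w - cId w‖ ≤ c := cId_est L hL w
  have hq : (L (iota (qw w))) w =
      ((L discAbsSqFun) w - discAbsSqFun w)
      - (starRingEnd ℂ) (w : ℂ) * ((L discIdFun) w - discIdFun w)
      - (w : ℂ) * ((L cId) w - cId w)
      + ((w : ℂ) * (starRingEnd ℂ) (w : ℂ)) * ((L 1) w - 1) := by
    rw [qw_decomp, map_add, map_sub, map_sub, map_smul, map_smul, map_smul]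
    simp only [ContinuousMap.sub_apply, ContinuousMap.add_apply, ContinuousMap.smul_apply,
      smul_eq_mul, ContinuousMap.one_apply]
    have h1 : discAbsSqFun w = (w : ℂ) * (starRingEnd ℂ) (w : ℂ) := by
      show ((‖(w : ℂ)‖ ^ 2 : ℝ) : ℂ) = _
      rw [Complex.ofReal_pow]
      exact abs_sq_eq _
    have h2 : discIdFun w = (w : ℂ) := rfl
    rw [h1, h2, cId_apply]
    ring
  have eqq : ‖(L (iota (qw w))) w‖ ≤ d + 2 * c + a := by
    rw [hq]
    have t1 : ‖((L discAbsSqFun) w - discAbsSqFun w)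
        - (starRingEnd ℂ) (w : ℂ) * ((L discIdFun) w - discIdFun w)
        - (w : ℂ) * ((L cId) w - cId w)
        + ((w : ℂ) * (starRingEnd ℂ) (w : ℂ)) * ((L 1) w - 1)‖
        ≤ ‖(L discAbsSqFun) w - discAbsSqFun w‖
          + ‖(starRingEnd ℂ) (w : ℂ)‖ * ‖(L discIdFun) w - discIdFun w‖
          + ‖(w : ℂ)‖ * ‖(L cId) w - cId w‖
          + ‖(w : ℂ)‖ * ‖(starRingEnd ℂ) (w : ℂ)‖ * ‖(L 1) w - 1‖ := by
      refine le_trans (norm_add_le _ _) ?_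
      rw [norm_mul, norm_mul]
      gcongr
      refine le_trans (norm_sub_le _ _) ?_
      rw [norm_mul]
      gcongr
      refine le_trans (norm_sub_le _ _) ?_
      rw [norm_mul]
    have hwn : ‖(w : ℂ)‖ ≤ 1 := by exact hw1
    have hwc : ‖(starRingEnd ℂ) (w : ℂ)‖ ≤ 1 := by rwa [RCLike.norm_conj]
    have b2 : ‖(starRingEnd ℂ) (w : ℂ)‖ * ‖(L discIdFun) w - discIdFun w‖ ≤ 1 * c :=
      mul_le_mul hwc e2 (norm_nonneg _) zero_le_one
    have b3 : ‖(w : ℂ)‖ * ‖(L cId) w - cId w‖ ≤ 1 * c :=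
      mul_le_mul hwn e4 (norm_nonneg _) zero_le_one
    have b4 : ‖(w : ℂ)‖ * ‖(starRingEnd ℂ) (w : ℂ)‖ * ‖(L 1) w - 1‖ ≤ 1 * 1 * a := by
      have := mul_le_mul hwn hwc (norm_nonneg _) zero_le_one
      exact mul_le_mul this e1 (norm_nonneg _) (by norm_num)
    calc _ ≤ _ := t1
      _ ≤ d + 1 * c + 1 * c + 1 * 1 * a := by
          exact add_le_add (add_le_add (add_le_add e3 b2) b3) b4
      _ = d + 2 * c + a := by ring
  have hre_q : ((L (iota (qw w))) w).re ≤ d + 2 * c + a :=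
    le_trans (Complex.re_le_norm _) eqq
  have hre_1 : ((L 1) w).re ≤ 1 + a := by
    have h := Complex.re_le_norm ((L 1) w - 1)
    rw [Complex.sub_re] at h
    have : ‖(L 1) w - 1‖ ≤ a := e1
    simp at h
    linarith
  have hb : ∀ z, |(g - g w • (1 : C(D1, ℝ))) z| ≤ (ε • (1 : C(D1, ℝ)) + K • qw w) z := by
    intro z
    simpa using hbd z w
  have main := abs_re_le L hL _ _ hb w
  have ih : iota (g - g w • (1 : C(D1, ℝ))) = iota g - (g w : ℂ) • (1 : C(D1, ℂ)) := by
    ext z; simp [iota]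
  have iG : iota (ε • (1 : C(D1, ℝ)) + K • qw w)
      = (ε : ℂ) • (1 : C(D1, ℂ)) + (K : ℂ) • iota (qw w) := by
    ext z; simp [iota]
  rw [ih, iG, map_sub, map_smul, map_add, map_smul, map_smul] at main
  simp only [ContinuousMap.sub_apply, ContinuousMap.add_apply, ContinuousMap.smul_apply,
    smul_eq_mul, Complex.sub_re, Complex.add_re, Complex.re_ofReal_mul] at main
  -- main : |((L (iota g)) w).re - (↑(g w) * (L 1) w).re| ≤ ε * ((L 1) w).re + K * (...)
  have hvim : ((L (iota g)) w - (g w : ℂ) * (L 1) w).im = 0 := by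
    have h := real_im L hL (g - g w • (1 : C(D1, ℝ))) w
    rw [ih, map_sub, map_smul] at h
    simpa using h
  have habsv : ‖(L (iota g)) w - (g w : ℂ) * (L 1) w‖
      = |((L (iota g)) w - (g w : ℂ) * (L 1) w).re| := by
    set v := (L (iota g)) w - (g w : ℂ) * (L 1) w
    conv_lhs => rw [show v = ((v.re : ℝ) : ℂ) from Complex.ext rfl (by simp [hvim])]
    exact (Complex.norm_real _).trans (Real.norm_eq_abs _)
  have hKq : K * ((L (iota (qw w))) w).re ≤ K * (d + 2 * c + a) :=
    mul_le_mul_of_nonneg_left hre_q hK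
  have hε1 : ε * ((L 1) w).re ≤ ε * (1 + a) := mul_le_mul_of_nonneg_left hre_1 hε.le
  have hgw : |g w| ≤ ‖g‖ := by
    have := g.norm_coe_le_norm w
    rwa [Real.norm_eq_abs] at this
  have hsplit : (L (iota g)) w - (g w : ℂ)
      = ((L (iota g)) w - (g w : ℂ) * (L 1) w) + (g w : ℂ) * ((L 1) w - 1) := by ring
  rw [hsplit]
  calc ‖_‖ ≤ ‖(L (iota g)) w - (g w : ℂ) * (L 1) w‖
        + ‖(g w : ℂ)‖ * ‖(L 1) w - 1‖ := by
        rw [← norm_mul]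
        exact norm_add_le _ _
    _ ≤ (ε * (1 + a) + K * (d + 2 * c + a)) + ‖g‖ * a := by
        have hmm : ‖(g w : ℂ)‖ * ‖(L 1) w - 1‖ ≤ ‖g‖ * a := by
          rw [Complex.norm_real, Real.norm_eq_abs]
          exact mul_le_mul hgw e1 (norm_nonneg _) (le_trans (abs_nonneg _) hgw)
        have hv : ‖(L (iota g)) w - (g w : ℂ) * (L 1) w‖
            ≤ ε * (1 + a) + K * (d + 2 * c + a) := by
          rw [habsv]
          calc |((L (iota g)) w - (g w : ℂ) * (L 1) w).re|
              ≤ ε * ((L 1) w).re + K * ((L (iota (qw w))) w).re := by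
                simpa [Complex.sub_re, Complex.mul_re] using main
            _ ≤ _ := add_le_add hε1 hKq
        exact add_le_add hv hmm
    _ ≤ _ := by simp [ha_def, hc_def, hd_def]

end KorovkinAux

open KorovkinAux in
/-- Complex Korovkin theorem on the closed unit disc `D = {z ∈ ℂ : |z| ≤ 1}`: if a sequence
of positive linear maps on `C(D)` converges uniformly to the identity on `1`, `z` and `|z|²`,
then it converges uniformly to the identity on all of `C(D)`. -/
theorem korovkin_disc
    (T : ℕ → (C(↥(Metric.closedBall (0 : ℂ) 1), ℂ) →ₗ[ℂ]
      C(↥(Metric.closedBall (0 : ℂ) 1), ℂ)))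
    (hpos : ∀ n, ∀ f : C(↥(Metric.closedBall (0 : ℂ) 1), ℂ),
      (∀ z, (f z).im = 0 ∧ 0 ≤ (f z).re) →
      ∀ z, ((T n f) z).im = 0 ∧ 0 ≤ ((T n f) z).re)
    (h1 : Tendsto (fun n => ‖T n 1 - 1‖) atTop (nhds 0))
    (hz : Tendsto (fun n => ‖T n discIdFun - discIdFun‖) atTop (nhds 0))
    (habs : Tendsto (fun n => ‖T n discAbsSqFun - discAbsSqFun‖) atTop (nhds 0)) :
    ∀ f : C(↥(Metric.closedBall (0 : ℂ) 1), ℂ),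
      Tendsto (fun n => ‖T n f - f‖) atTop (nhds 0) := by
  have realcase : ∀ g : C(D1, ℝ),
      Tendsto (fun n => ‖T n (iota g) - iota g‖) atTop (nhds 0) := by
    intro g
    rw [Metric.tendsto_atTop]
    intro ε hε
    have hε0 : 0 < ε / 4 := by linarith
    obtain ⟨δ, hδ, hu⟩ : ∃ δ > 0, ∀ z w : D1, dist z w < δ → |g z - g w| < ε / 4 := by
      have hc := CompactSpace.uniformContinuous_of_continuous g.continuous
      rw [Metric.uniformContinuous_iff] at hc
      obtain ⟨δ, hδ, h⟩ := hc (ε / 4) hε0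
      exact ⟨δ, hδ, fun z w hzw => by
        have hh := h hzw
        rwa [Real.dist_eq] at hh⟩
    set K := 2 * ‖g‖ / δ ^ 2 with hK_def
    have hK : 0 ≤ K := by positivity
    have hbd : ∀ z w : D1,
        |g z - g w| ≤ ε / 4 + K * ‖(z : ℂ) - (w : ℂ)‖ ^ 2 := by
      intro z w
      have hdist : dist z w = ‖(z : ℂ) - (w : ℂ)‖ := by
        rw [Subtype.dist_eq, Complex.dist_eq]
      rcases lt_or_ge (dist z w) δ with hlt | hge
      · have hle := (hu z w hlt).le
        have h2 : 0 ≤ K * ‖(z : ℂ) - (w : ℂ)‖ ^ 2 := by positivity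
        linarith
      · have h2 : |g z - g w| ≤ 2 * ‖g‖ := by
          have hz' := g.norm_coe_le_norm z
          have hw' := g.norm_coe_le_norm w
          rw [Real.norm_eq_abs] at hz' hw'
          have htr : |g z - g w| ≤ |g z| + |g w| := by
            have := abs_add_le (g z) (-(g w))
            simpa [sub_eq_add_neg] using this
          linarith
        rw [hdist] at hge
        have hδ2 : δ ^ 2 ≤ ‖(z : ℂ) - (w : ℂ)‖ ^ 2 :=
          pow_le_pow_left₀ hδ.le hge 2
        have hKδ : K * δ ^ 2 = 2 * ‖g‖ := by
          rw [hK_def]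
          field_simp
        nlinarith [mul_le_mul_of_nonneg_left hδ2 hK]
    have hB : Tendsto (fun n => ε / 4 * (1 + ‖T n 1 - 1‖)
        + K * (‖T n discAbsSqFun - discAbsSqFun‖ + 2 * ‖T n discIdFun - discIdFun‖
          + ‖T n 1 - 1‖)
        + ‖g‖ * ‖T n 1 - 1‖) atTop
        (nhds (ε / 4 * (1 + 0) + K * (0 + 2 * 0 + 0) + ‖g‖ * 0)) := by
      exact ((tendsto_const_nhds.mul (tendsto_const_nhds.add h1)).add
        (tendsto_const_nhds.mul ((habs.add (tendsto_const_nhds.mul hz)).add h1))).add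
        (tendsto_const_nhds.mul h1)
    rw [show ε / 4 * (1 + 0) + K * (0 + 2 * 0 + 0) + ‖g‖ * 0 = ε / 4 by ring] at hB
    have hev := hB.eventually_lt_const (show ε / 4 < ε by linarith)
    obtain ⟨N, hN⟩ := eventually_atTop.1 hev
    refine ⟨N, fun n hn => ?_⟩
    have hBn : 0 ≤ ε / 4 * (1 + ‖T n 1 - 1‖)
        + K * (‖T n discAbsSqFun - discAbsSqFun‖ + 2 * ‖T n discIdFun - discIdFun‖
          + ‖T n 1 - 1‖)
        + ‖g‖ * ‖T n 1 - 1‖ := by positivity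
    have hnorm : ‖T n (iota g) - iota g‖ ≤ ε / 4 * (1 + ‖T n 1 - 1‖)
        + K * (‖T n discAbsSqFun - discAbsSqFun‖ + 2 * ‖T n discIdFun - discIdFun‖
          + ‖T n 1 - 1‖)
        + ‖g‖ * ‖T n 1 - 1‖ := by
      rw [ContinuousMap.norm_le _ hBn]
      intro w
      rw [ContinuousMap.sub_apply, iota_apply]
      exact key_est (T n) (hpos n) g (ε / 4) K hε0 hK hbd w
    rw [Real.dist_eq, sub_zero, abs_of_nonneg (norm_nonneg _)]
    exact lt_of_le_of_lt hnorm (hN n hn)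
  intro f
  obtain ⟨g1, g2, hf⟩ : ∃ g1 g2 : C(D1, ℝ), f = iota g1 + Complex.I • iota g2 :=
    ⟨⟨fun z => (f z).re, Complex.continuous_re.comp f.continuous⟩,
     ⟨fun z => (f z).im, Complex.continuous_im.comp f.continuous⟩,
     by ext z; simp [iota, Complex.ext_iff]⟩
  have hsub : ∀ n, T n f - f = (T n (iota g1) - iota g1)
      + Complex.I • (T n (iota g2) - iota g2) := by
    intro n
    rw [hf, map_add, map_smul, smul_sub]
    abel
  have hbound : ∀ n, ‖T n f - f‖ ≤ ‖T n (iota g1) - iota g1‖ + ‖T n (iota g2) - iota g2‖ := by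
    intro n
    rw [hsub n]
    refine le_trans (norm_add_le _ _) ?_
    rw [norm_smul]
    simp
  have htend := (realcase g1).add (realcase g2)
  rw [add_zero] at htend
  exact squeeze_zero (fun n => norm_nonneg _) hbound htend
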